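/- For a Weyl group W with parabolic subgroup W_P and u, w ∈ W, the following are equivalent: (1) u ≤_P w; (2) uv ≤_P wv for every v ∈ W_P; (3) uv ≤ wv in Bruhat order for some v ∈ W_P such that wv ∈ W^P. -/

import Mathlib

/-!
STATEMENT 2: For a Weyl group `W` with parabolic subgroup `W_P` and `u, w ∈ W`, the
following are equivalent: (1) `u ≤_P w`; (2) `u*v ≤_P w*v` for every `v ∈ W_P`;
(3) `u*v ≤ w*v` in the Bruhat order for some `v ∈ W_P` with `w*v ∈ W^P`.
-/

open CoxeterSystem

variable {B W : Type*} [Group W]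

/-- The parabolic subgroup `W_P` generated by the simple reflections indexed by `J`. -/
def parabolicSubgroup {M : CoxeterMatrix B} (cs : CoxeterSystem M W) (J : Set B) : Subgroup W :=
  Subgroup.closure (cs.simple '' J)

/-- One step of the extended `P`-Bruhat order: right multiplication by a reflection `s_α`
with `α ∈ R⁺ \ R_P⁺` (i.e. a reflection of `W` not lying in `W_P`) that increases length. -/
def extPStep {M : CoxeterMatrix B} (cs : CoxeterSystem M W) (J : Set B) (u w : W) : Prop :=
  ∃ t : W, cs.IsReflection t ∧ t ∉ parabolicSubgroup cs J ∧ w = u * t ∧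
    cs.length u < cs.length w

/-- The extended `P`-Bruhat order `≤_P`. -/
def extPLE {M : CoxeterMatrix B} (cs : CoxeterSystem M W) (J : Set B) : W → W → Prop :=
  Relation.ReflTransGen (extPStep cs J)

/-- The ordinary Bruhat order on `W`. -/
def bruhatLE {M : CoxeterMatrix B} (cs : CoxeterSystem M W) : W → W → Prop :=
  Relation.ReflTransGen
    (fun u w => ∃ t : W, cs.IsReflection t ∧ w = u * t ∧ cs.length u < cs.length w)

/-- `w` is a minimal-length representative of its coset `w * W_P`, i.e. `w ∈ W^P`. -/
def isMinimalRep {M : CoxeterMatrix B} (cs : CoxeterSystem M W) (J : Set B) (w : W) : Prop :=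
  ∀ v ∈ parabolicSubgroup cs J, cs.length w ≤ cs.length (w * v)

open CoxeterSystem List
open scoped Classical

namespace ExtPAux

section GroupLemmas

variable {G : Type*} [Group G] {a b : G}

lemma inv_of_invol (hb : b * b = 1) : b⁻¹ = b := inv_eq_of_mul_eq_one_right hb

lemma I1 (ha : a * a = 1) (hb : b * b = 1) (k : ℤ) : b * (a*b)^k * b = (a*b)^(-k) := by
  have h : b * (a*b) * b⁻¹ = (a*b)⁻¹ := by
    rw [inv_of_invol hb, mul_inv_rev, inv_of_invol ha, inv_of_invol hb]
    rw [mul_assoc, mul_assoc, hb, mul_one]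
  have h2 := map_zpow (MulAut.conj b) (a*b) k
  simp only [MulAut.conj_apply] at h2
  rw [h] at h2
  rw [inv_of_invol hb] at h2
  rw [h2, inv_zpow, ← zpow_neg]

lemma I1' (ha : a * a = 1) (hb : b * b = 1) (k : ℤ) : b * (a*b)^k = (a*b)^(-k) * b := by
  have h := I1 ha hb k
  calc b * (a*b)^k = (b * (a*b)^k * b) * b := by rw [mul_assoc _ b b, hb, mul_one]
    _ = (a*b)^(-k) * b := by rw [h]

lemma I2 (ha : a * a = 1) (hb : b * b = 1) (k : ℤ) :
    (a*b)^(-k) * b * (a*b)^k = (a*b)^(-(2*k)) * b := by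
  rw [mul_assoc, I1' ha hb k, ← mul_assoc, ← zpow_add]
  congr 1
  ring

lemma I3 (ha : a * a = 1) (hb : b * b = 1) : b * a * b = (a*b)^(-1:ℤ) * b := by
  have h : (a*b)⁻¹ = b * a := by rw [mul_inv_rev, inv_of_invol ha, inv_of_invol hb]
  rw [zpow_neg_one, h]

lemma I4 (ha : a * a = 1) (hb : b * b = 1) (k : ℤ) :
    (a*b)^(-k) * (b*a*b) * (a*b)^k = (a*b)^(-(2*k+1)) * b := by
  rw [I3 ha hb, ← mul_assoc, ← zpow_add, mul_assoc, I1' ha hb k, ← mul_assoc, ← zpow_add]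
  congr 1
  ring

lemma conj_eq_iff (x t c : G) : (x * t * x⁻¹ = c) ↔ (t = x⁻¹ * c * x) := by
  constructor
  · intro h; rw [← h]; group
  · intro h; rw [h]; group

end GroupLemmas

variable {B W : Type*} [Group W] {M : CoxeterMatrix B} (cs : CoxeterSystem M W)

local prefix:100 "σ" => cs.simple
local prefix:100 "π" => cs.wordProd
local prefix:100 "ℓ" => cs.length
local prefix:100 "ris" => cs.rightInvSeq

/-- The basic toggle map on `W × ZMod 2`. -/
noncomputable def toggle (i : B) : W × ZMod 2 → W × ZMod 2 :=
  fun p => (σ i * p.1 * σ i, p.2 + if p.1 = σ i then 1 else 0)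

lemma toggle_involutive (i : B) : Function.Involutive (toggle cs i) := by
  rintro ⟨x, e⟩
  simp only [toggle]
  have h1 : σ i * (σ i * x * σ i) * σ i = x := by
    rw [← mul_assoc, ← mul_assoc, cs.simple_mul_simple_self, one_mul, mul_assoc,
      cs.simple_mul_simple_self, mul_one]
  have h2 : (σ i * x * σ i = σ i) ↔ (x = σ i) := by
    constructor
    · intro h
      have h3 := congrArg (fun y => σ i * y * σ i) h
      rw [h1] at h3
      rw [h3, cs.simple_mul_simple_self, one_mul]
    · rintro h; rw [h, cs.simple_mul_simple_self, one_mul]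
  by_cases hx : x = σ i
  · simp only [h1, h2, hx, if_pos rfl, Prod.mk.injEq, true_and]
    rw [add_assoc]
    simp [CharTwo.add_self_eq_zero]
  · simp only [h1, h2, hx, if_neg, Prod.mk.injEq, true_and]
    simp

/-- The toggle as a permutation. -/
noncomputable def togglePerm (i : B) : Equiv.Perm (W × ZMod 2) := (toggle_involutive cs i).toPerm

lemma togglePerm_apply (i : B) (p : W × ZMod 2) :
    togglePerm cs i p = (σ i * p.1 * σ i, p.2 + if p.1 = σ i then 1 else 0) := rfl

lemma togglePerm_mul_pow_apply (i i' : B) (n : ℕ) (t : W) (e : ZMod 2) :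
    ((togglePerm cs i * togglePerm cs i') ^ n) (t, e) =
      ((σ i * σ i') ^ (n : ℤ) * t * (σ i * σ i') ^ (-(n : ℤ)),
        e + ∑ a ∈ Finset.range (2 * n),
          if t = (σ i * σ i') ^ (-(a : ℤ)) * σ i' then 1 else 0) := by
  have ha : σ i * σ i = 1 := cs.simple_mul_simple_self i
  have hb : σ i' * σ i' = 1 := cs.simple_mul_simple_self i'
  set r := σ i * σ i' with hr
  induction n with
  | zero => simp
  | succ n ih =>
    rw [pow_succ', Equiv.Perm.mul_apply, ih, Equiv.Perm.mul_apply,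
      togglePerm_apply, togglePerm_apply]
    simp only
    set X := r ^ (n:ℤ) * t * r ^ (-(n:ℤ)) with hX
    have hXconj : X = r ^ (n:ℤ) * t * (r ^ (n:ℤ))⁻¹ := by rw [hX, zpow_neg]
    have hba : σ i' * σ i = r⁻¹ := by
      rw [hr, mul_inv_rev, inv_of_invol ha, inv_of_invol hb]
    have e1 : σ i * (σ i' * X * σ i') * σ i
        = r ^ ((n+1 : ℕ) : ℤ) * t * r ^ (-((n+1:ℕ) : ℤ)) := by
      calc σ i * (σ i' * X * σ i') * σ i = (σ i * σ i') * X * (σ i' * σ i) := by group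
        _ = r * X * r⁻¹ := by rw [← hr, hba]
        _ = r * (r ^ (n:ℤ) * t * r ^ (-(n:ℤ))) * r⁻¹ := by rw [← hX]
        _ = r ^ ((n+1 : ℕ) : ℤ) * t * r ^ (-((n+1:ℕ) : ℤ)) := by push_cast; group
    have hcond1 : (X = σ i') ↔ (t = r ^ (-((2*n : ℕ):ℤ)) * σ i') := by
      rw [hXconj, conj_eq_iff]
      have h : (r^((n:ℤ)))⁻¹ * σ i' * r^((n:ℤ)) = r ^ (-((2*n : ℕ):ℤ)) * σ i' := by
        rw [← zpow_neg, I2 ha hb]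
        have hexp : (-(2*(n:ℤ))) = -((2*n : ℕ):ℤ) := by push_cast; ring
        rw [hexp]
      rw [h]
    have hcond2 : (σ i' * X * σ i' = σ i) ↔ (t = r ^ (-((2*n+1 : ℕ):ℤ)) * σ i') := by
      have hs : σ i' * X * σ i' = σ i' * X * (σ i')⁻¹ := by rw [inv_of_invol hb]
      rw [hs, conj_eq_iff, inv_of_invol hb, hXconj, conj_eq_iff]
      have h : (r^((n:ℤ)))⁻¹ * (σ i' * σ i * σ i') * r^((n:ℤ))
          = r ^ (-((2*n+1 : ℕ):ℤ)) * σ i' := by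
        rw [← zpow_neg, I4 ha hb]
        have hexp : (-(2*(n:ℤ)+1)) = -((2*n+1 : ℕ):ℤ) := by push_cast; ring
        rw [hexp]
      rw [h]
    rw [Prod.mk.injEq]
    constructor
    · exact e1
    · rw [show 2*(n+1) = 2*n+1+1 by ring, Finset.sum_range_succ, Finset.sum_range_succ]
      simp only [hcond1, hcond2]
      push_cast
      ring

lemma isLiftable_togglePerm : M.IsLiftable (togglePerm cs) := by
  intro i i'
  set m := M i i' with hm
  apply Equiv.ext
  rintro ⟨t, e⟩
  have hrm : (σ i * σ i') ^ (m : ℤ) = 1 := by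
    rw [zpow_natCast, cs.simple_mul_simple_pow]
  have hrm' : (σ i * σ i') ^ (-(m : ℤ)) = 1 := by rw [zpow_neg, hrm, inv_one]
  rw [togglePerm_mul_pow_apply]
  have hsum : ∑ a ∈ Finset.range (2 * m),
      (if t = (σ i * σ i') ^ (-(a : ℤ)) * σ i' then (1 : ZMod 2) else 0) = 0 := by
    rw [two_mul, Finset.sum_range_add]
    have hg : ∀ a : ℕ, (if t = (σ i * σ i') ^ (-((m + a : ℕ) : ℤ)) * σ i' then (1 : ZMod 2) else 0)
        = (if t = (σ i * σ i') ^ (-(a : ℤ)) * σ i' then (1 : ZMod 2) else 0) := by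
      intro a
      congr 2
      push_cast
      rw [neg_add, zpow_add, hrm', one_mul]
    simp only [hg]
    exact CharTwo.add_self_eq_zero _
  rw [hrm, hsum, add_zero, one_mul, hrm', mul_one]
  rfl

/-- The reflection-cocycle homomorphism. -/
noncomputable def cocycle : W →* Equiv.Perm (W × ZMod 2) :=
  cs.lift ⟨togglePerm cs, isLiftable_togglePerm cs⟩

lemma cocycle_simple (i : B) : cocycle cs (σ i) = togglePerm cs i :=
  cs.lift_apply_simple (isLiftable_togglePerm cs) i

lemma cocycle_wordProd (ω : List B) (t : W) (e : ZMod 2) :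
    cocycle cs (π ω) (t, e) = (π ω * t * (π ω)⁻¹, e + ((ris ω).count t : ZMod 2)) := by
  induction ω generalizing t e with
  | nil => simp
  | cons i ω ih =>
    rw [cs.wordProd_cons, map_mul, Equiv.Perm.mul_apply, ih, cocycle_simple, togglePerm_apply]
    simp only
    rw [Prod.mk.injEq]
    constructor
    · rw [mul_inv_rev, cs.inv_simple]
      group
    · have hc : (π ω * t * (π ω)⁻¹ = σ i) ↔ (t = (π ω)⁻¹ * σ i * π ω) := conj_eq_iff _ _ _
      rw [hc]
      rw [show cs.rightInvSeq (i :: ω) = ((π ω)⁻¹ * σ i * π ω) :: cs.rightInvSeq ω from rfl]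
      have hcount : ((((π ω)⁻¹ * σ i * π ω) :: cs.rightInvSeq ω).count t : ZMod 2)
          = ((cs.rightInvSeq ω).count t : ZMod 2)
            + (if t = (π ω)⁻¹ * σ i * π ω then 1 else 0) := by
        rw [List.count_cons]
        by_cases h : t = (π ω)⁻¹ * σ i * π ω
        · simp [h]
        · simp [h]
          exact fun h' => absurd h'.symm h
      rw [hcount, add_assoc]

/-- The inversion parity function. -/
noncomputable def eta (w t : W) : ZMod 2 := (cocycle cs w (t, 0)).2

lemma eta_wordProd (ω : List B) (t : W) : eta cs (π ω) t = ((ris ω).count t : ZMod 2) := by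
  rw [eta, cocycle_wordProd]
  simp

lemma cocycle_apply (w t : W) (e : ZMod 2) :
    cocycle cs w (t, e) = (w * t * w⁻¹, e + eta cs w t) := by
  obtain ⟨ω, rfl⟩ := cs.wordProd_surjective w
  rw [cocycle_wordProd, eta_wordProd]

lemma eta_mul (w₁ w₂ t : W) : eta cs (w₁ * w₂) t = eta cs w₂ t + eta cs w₁ (w₂ * t * w₂⁻¹) := by
  have h1 : cocycle cs (w₁*w₂) (t,0) = ((w₁*w₂)*t*(w₁*w₂)⁻¹, 0 + eta cs (w₁*w₂) t) :=
    cocycle_apply cs (w₁*w₂) t 0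
  have h2 : cocycle cs (w₁*w₂) (t,0) = cocycle cs w₁ (cocycle cs w₂ (t,0)) := by
    rw [map_mul, Equiv.Perm.mul_apply]
  rw [cocycle_apply cs w₂, cocycle_apply cs w₁] at h2
  have h3 := congrArg Prod.snd (h1.symm.trans h2)
  simp only [zero_add] at h3
  exact h3

lemma eta_simple_self (i : B) : eta cs (σ i) (σ i) = 1 := by
  have h := eta_wordProd cs [i] (σ i)
  rw [cs.wordProd_singleton] at h
  rw [h, cs.rightInvSeq_singleton]
  simp

lemma eta_one_right (t : W) : eta cs 1 t = 0 := by
  have h := eta_wordProd cs [] t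
  simpa using h

lemma eta_inv (w t : W) : eta cs w⁻¹ (w * t * w⁻¹) = eta cs w t := by
  have h := eta_mul cs w⁻¹ w t
  rw [inv_mul_cancel, eta_one_right] at h
  have h2 : ∀ x y : ZMod 2, (0 : ZMod 2) = x + y → y = x := by decide
  exact h2 _ _ h

lemma eta_refl_self {t : W} (ht : cs.IsReflection t) : eta cs t t = 1 := by
  obtain ⟨w, i, rfl⟩ := ht
  have h1 := eta_mul cs (w * σ i) w⁻¹ (w * σ i * w⁻¹)
  have e1 : w⁻¹ * (w * σ i * w⁻¹) * w⁻¹⁻¹ = σ i := by group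
  rw [show w * σ i * w⁻¹ = w * σ i * w⁻¹ from rfl] at h1
  rw [e1] at h1
  have h2 := eta_mul cs w (σ i) (σ i)
  have e2 : σ i * σ i * (σ i)⁻¹ = σ i := by rw [cs.inv_simple, mul_assoc, cs.simple_mul_simple_self, mul_one]
  rw [e2, eta_simple_self] at h2
  have h3 : eta cs w⁻¹ (w * σ i * w⁻¹) = eta cs w (σ i) := by
    have := eta_inv cs w (σ i)
    rwa [show w * σ i * w⁻¹ = w * σ i * w⁻¹ from rfl] at this
  rw [h3, h2] at h1
  rw [h1]
  have h4 : ∀ x : ZMod 2, x + (1 + x) = 1 := by decide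
  exact h4 _

lemma isRightInversion_of_eta_one {w t : W} (h : eta cs w t = 1) :
    cs.IsRightInversion w t := by
  obtain ⟨ω, hred, rfl⟩ := cs.exists_reduced_word' w
  rw [eta_wordProd] at h
  have hmem : t ∈ ris ω := by
    by_contra hmem
    rw [List.count_eq_zero_of_not_mem hmem] at h
    simp at h
  exact cs.isRightInversion_of_mem_rightInvSeq hred hmem

lemma eta_eq_one_iff {w t : W} (ht : cs.IsReflection t) :
    eta cs w t = 1 ↔ ℓ (w * t) < ℓ w := by
  constructor
  · intro h
    exact (isRightInversion_of_eta_one cs h).2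
  · intro hlt
    by_contra h
    have hx : ∀ x : ZMod 2, x ≠ 1 → x = 0 := by decide
    have h0 : eta cs w t = 0 := hx _ h
    have h1 : eta cs (w * t) t = 1 := by
      rw [eta_mul, eta_refl_self cs ht]
      have e : t * t * t⁻¹ = t := by rw [ht.mul_self, one_mul, ht.inv]
      rw [e, h0, add_zero]
    have h2 := (isRightInversion_of_eta_one cs h1).2
    rw [mul_assoc, ht.mul_self, mul_one] at h2
    omega

/-- Strong exchange. -/
lemma strong_exchange {w t : W} (ht : cs.IsReflection t) (hlt : ℓ (w * t) < ℓ w)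
    (ω : List B) (hω : π ω = w) :
    ∃ k, k < ω.length ∧ w * t = π (ω.eraseIdx k) := by
  have h1 : eta cs w t = 1 := (eta_eq_one_iff cs ht).mpr hlt
  rw [← hω, eta_wordProd] at h1
  have hmem : t ∈ ris ω := by
    by_contra hmem
    rw [List.count_eq_zero_of_not_mem hmem] at h1
    simp at h1
  obtain ⟨k, hk, hget⟩ := List.mem_iff_getElem.mp hmem
  rw [cs.length_rightInvSeq] at hk
  refine ⟨k, hk, ?_⟩
  have := cs.wordProd_mul_getD_rightInvSeq ω k
  rw [← hω, ← this]
  congr 1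
  rw [← hget, List.getD_eq_getElem]


section Bruhat

lemma bruhat_length_le {x z : W} (h : bruhatLE cs x z) : ℓ x ≤ ℓ z := by
  induction h with
  | refl => exact le_refl _
  | tail h1 step ih =>
    obtain ⟨t, _, rfl, hlen⟩ := step
    omega

lemma bruhat_eq_of_length_eq {x z : W} (h : bruhatLE cs x z) (hl : ℓ x = ℓ z) : x = z := by
  induction h with
  | refl => rfl
  | tail h1 step ih =>
    obtain ⟨t, _, rfl, hlen⟩ := step
    have := bruhat_length_le cs h1
    omega

lemma bruhat_step {x t : W} (ht : cs.IsReflection t) (hl : ℓ x < ℓ (x * t)) :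
    bruhatLE cs x (x * t) :=
  Relation.ReflTransGen.single ⟨t, ht, rfl, hl⟩

lemma bruhat_simple_mul_step {x : W} (i : B) (hl : ℓ x < ℓ (σ i * x)) :
    bruhatLE cs x (σ i * x) := by
  have ht : cs.IsReflection (x⁻¹ * σ i * x) := by
    have := (cs.isReflection_simple i).conj x⁻¹
    rwa [inv_inv] at this
  have he : x * (x⁻¹ * σ i * x) = σ i * x := by group
  have := bruhat_step cs ht (by rw [he]; exact hl)
  rwa [he] at this

/-- Key one-step lemma: the mirror exchange argument. -/
lemma sl3 {y y₁ t : W} (i : B) (ht : cs.IsReflection t) (h1 : y₁ = y * t)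
    (h2 : ℓ y < ℓ y₁) (h3 : ℓ (σ i * y₁) < ℓ y₁) (h4 : ℓ y < ℓ (σ i * y)) :
    bruhatLE cs y (σ i * y₁) := by
  obtain ⟨α, hαred, hα⟩ := cs.exists_reduced_word' (σ i * y₁)
  have hω : π (i :: α) = y₁ := by
    rw [cs.wordProd_cons, ← hα, ← mul_assoc, cs.simple_mul_simple_self, one_mul]
  have hyt : y₁ * t = y := by rw [h1, mul_assoc, ht.mul_self, mul_one]
  obtain ⟨k, hk, hke⟩ := strong_exchange cs ht (by rw [hyt]; exact h2) (i :: α) hω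
  rw [hyt] at hke
  match k, hk with
  | 0, _ =>
    rw [List.eraseIdx_cons_zero, ← hα] at hke
    rw [hke]
    exact Relation.ReflTransGen.refl
  | (j+1), hk =>
    rw [List.eraseIdx_cons_succ] at hke
    rw [cs.wordProd_cons] at hke
    have hj : j < α.length := by simpa using hk
    -- y = σ i * π (α.eraseIdx j), so σ i * y = π (α.eraseIdx j)
    have hβ : π (α.eraseIdx j) = σ i * y := by
      rw [hke, ← mul_assoc, cs.simple_mul_simple_self, one_mul]
    -- the erased word is obtained from α by deleting a right inversion
    have hgetd := cs.wordProd_mul_getD_rightInvSeq α j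
    set t' := (cs.rightInvSeq α).getD j 1 with ht'
    have hmem : t' ∈ cs.rightInvSeq α := by
      rw [ht', List.getD_eq_getElem _ _ (by rw [cs.length_rightInvSeq]; exact hj)]
      exact List.getElem_mem _
    have hinv := cs.isRightInversion_of_mem_rightInvSeq hαred hmem
    -- π (α.eraseIdx j) = π α * t'
    have hstep : bruhatLE cs (π (α.eraseIdx j)) (π α) := by
      have heq : π α = π (α.eraseIdx j) * t' := by
        rw [← hgetd, mul_assoc, hinv.1.mul_self, mul_one]
      have hlen : ℓ (π (α.eraseIdx j)) < ℓ (π α) := by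
        rw [← hgetd]; exact hinv.2
      have := bruhat_step cs hinv.1 (by rw [← heq]; exact hlen)
      rwa [← heq] at this
    rw [hβ] at hstep
    rw [← hα] at hstep
    exact Relation.ReflTransGen.trans (bruhat_simple_mul_step cs i h4) hstep

/-- Left lifting property, descent version. -/
lemma liftL3 {y z : W} (i : B) (h : bruhatLE cs y z) :
    ℓ (σ i * z) < ℓ z → ℓ y < ℓ (σ i * y) → bruhatLE cs y (σ i * z) := by
  induction h with
  | refl => intro hz hy; omega
  | @tail z₀ z h1 step ih =>
    intro hz hy
    obtain ⟨t, ht, rfl, hlen⟩ := step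
    rcases lt_or_gt_of_ne (cs.length_simple_mul_ne z₀ i) with hc0 | hc0
    · -- descent at z₀ : use IH then one more step
      have ihh := ih hc0 hy
      have hstep : bruhatLE cs (σ i * z₀) (σ i * (z₀ * t)) := by
        have he : σ i * (z₀ * t) = (σ i * z₀) * t := by group
        have hl : ℓ (σ i * z₀) < ℓ ((σ i * z₀) * t) := by
          rw [← he]
          rcases cs.length_simple_mul z₀ i with h' | h' <;>
          rcases cs.length_simple_mul (z₀ * t) i with h'' | h'' <;> omega
        have := bruhat_step cs ht hl
        rwa [← he] at this
      exact Relation.ReflTransGen.trans ihh hstep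
    · -- ascent at z₀ : SL3
      have := sl3 cs i ht rfl hlen hz hc0
      exact Relation.ReflTransGen.trans h1 this

/-- Left lifting property, ascent version. -/
lemma liftL4 (i : B) : ∀ n {y z : W}, ℓ z ≤ n → bruhatLE cs y z → ℓ z < ℓ (σ i * z) →
    ℓ y < ℓ (σ i * y) → bruhatLE cs (σ i * y) (σ i * z) := by
  intro n
  induction n with
  | zero =>
    intro y z hn h hz hy
    have h1 := bruhat_length_le cs h
    have h2 : ℓ z = 0 := by omega
    have h3 : ℓ y = 0 := by omega
    rw [bruhat_eq_of_length_eq cs h (by omega)]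
    exact Relation.ReflTransGen.refl
  | succ n IH =>
    intro y z hn h hz hy
    rcases (Relation.ReflTransGen.cases_tail h) with rfl | ⟨z₀, h1, step⟩
    · exact Relation.ReflTransGen.refl
    · obtain ⟨t, ht, rfl, hlen⟩ := step
      rcases lt_or_gt_of_ne (cs.length_simple_mul_ne z₀ i) with hc0 | hc0
      · -- descent at z₀
        have hw0 : bruhatLE cs y (σ i * z₀) := liftL3 cs i h1 hc0 hy
        have hrise : ℓ (σ i * z₀) < ℓ (σ i * (σ i * z₀)) := by
          rw [cs.simple_mul_simple_cancel_left]
          exact hc0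
        have h2 : bruhatLE cs (σ i * y) (σ i * (σ i * z₀)) := by
          apply IH (by omega) hw0 hrise hy
        rw [cs.simple_mul_simple_cancel_left] at h2
        -- now z₀ ≤ z₀ t ≤ σ i (z₀ t)
        have h3 : bruhatLE cs z₀ (z₀ * t) := bruhat_step cs ht hlen
        have h4 : bruhatLE cs (z₀ * t) (σ i * (z₀ * t)) := bruhat_simple_mul_step cs i hz
        exact h2.trans (h3.trans h4)
      · -- ascent at z₀ : recurse
        have h2 : bruhatLE cs (σ i * y) (σ i * z₀) := IH (by omega) h1 hc0 hy
        have hstep : bruhatLE cs (σ i * z₀) (σ i * (z₀ * t)) := by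
          have he : σ i * (z₀ * t) = (σ i * z₀) * t := by group
          have hl : ℓ (σ i * z₀) < ℓ ((σ i * z₀) * t) := by
            rw [← he]
            rcases cs.length_simple_mul z₀ i with h' | h' <;> omega
          have := bruhat_step cs ht hl
          rwa [← he] at this
        exact h2.trans hstep

lemma liftL4' {y z : W} (i : B) (h : bruhatLE cs y z) (hz : ℓ z < ℓ (σ i * z))
    (hy : ℓ y < ℓ (σ i * y)) : bruhatLE cs (σ i * y) (σ i * z) :=
  liftL4 cs i (ℓ z) le_rfl h hz hy

/-- Left lifting property (i). -/
lemma liftL1 {y z : W} (i : B) (h : bruhatLE cs y z) (hz : ℓ (σ i * z) < ℓ z) :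
    bruhatLE cs (σ i * y) z := by
  rcases lt_or_gt_of_ne (cs.length_simple_mul_ne y i) with hc | hc
  · -- descent at y
    have h1 : bruhatLE cs (σ i * y) y := by
      have := bruhat_simple_mul_step cs i (x := σ i * y)
        (by rw [cs.simple_mul_simple_cancel_left]; exact hc)
      rwa [cs.simple_mul_simple_cancel_left] at this
    exact h1.trans h
  · have h1 : bruhatLE cs y (σ i * z) := liftL3 cs i h hz hc
    have h2 : bruhatLE cs (σ i * y) (σ i * (σ i * z)) := by
      apply liftL4' cs i h1 _ hc
      rw [cs.simple_mul_simple_cancel_left]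
      exact hz
    rwa [cs.simple_mul_simple_cancel_left] at h2

/-- Left lifting property (ii). -/
lemma liftL2 {y z : W} (i : B) (h : bruhatLE cs y z) (hz : ℓ (σ i * z) < ℓ z)
    (hy : ℓ (σ i * y) < ℓ y) : bruhatLE cs (σ i * y) (σ i * z) := by
  have h1 : bruhatLE cs (σ i * y) y := by
    have := bruhat_simple_mul_step cs i (x := σ i * y)
      (by rw [cs.simple_mul_simple_cancel_left]; exact hy)
    rwa [cs.simple_mul_simple_cancel_left] at this
  apply liftL3 cs i (h1.trans h) hz
  rw [cs.simple_mul_simple_cancel_left]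
  exact hy

end Bruhat

section Parabolic

variable (J : Set B)

lemma simple_mem_parabolic {j : B} (hj : j ∈ J) : σ j ∈ parabolicSubgroup cs J :=
  Subgroup.subset_closure ⟨j, hj, rfl⟩

lemma wordProd_mem_parabolic {α : List B} (hα : ∀ j ∈ α, j ∈ J) :
    π α ∈ parabolicSubgroup cs J := by
  induction α with
  | nil => rw [cs.wordProd_nil]; exact one_mem _
  | cons j β ih =>
    rw [cs.wordProd_cons]
    exact mul_mem (simple_mem_parabolic cs J (hα j (by simp)))
      (ih (fun j' hj' => hα j' (by simp [hj'])))

lemma parabolic_word {v : W} (hv : v ∈ parabolicSubgroup cs J) :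
    ∃ α : List B, (∀ j ∈ α, j ∈ J) ∧ π α = v := by
  induction hv using Subgroup.closure_induction with
  | mem x hx =>
    obtain ⟨j, hj, rfl⟩ := hx
    exact ⟨[j], by simpa using hj, cs.wordProd_singleton j⟩
  | one => exact ⟨[], by simp, cs.wordProd_nil⟩
  | mul x y hx hy ihx ihy =>
    obtain ⟨α, hα, rfl⟩ := ihx
    obtain ⟨β, hβ, rfl⟩ := ihy
    exact ⟨α ++ β, fun j hj => (List.mem_append.mp hj).elim (hα j) (hβ j),
      cs.wordProd_append α β⟩
  | inv x hx ihx =>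
    obtain ⟨α, hα, rfl⟩ := ihx
    exact ⟨α.reverse, fun j hj => hα j (List.mem_reverse.mp hj), cs.wordProd_reverse α⟩

lemma not_mem_parabolic_conj {t v : W} (hv : v ∈ parabolicSubgroup cs J)
    (ht : t ∉ parabolicSubgroup cs J) : v⁻¹ * t * v ∉ parabolicSubgroup cs J := by
  intro hmem
  apply ht
  have : t = v * (v⁻¹ * t * v) * v⁻¹ := by group
  rw [this]
  exact mul_mem (mul_mem hv hmem) (inv_mem hv)

lemma exists_minRep (w : W) :
    ∃ v ∈ parabolicSubgroup cs J, isMinimalRep cs J (w * v) := by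
  set S : Set ℕ := {n | ∃ v ∈ parabolicSubgroup cs J, ℓ (w * v) = n} with hS
  have hne : S.Nonempty := ⟨ℓ (w * 1), 1, one_mem _, rfl⟩
  obtain ⟨v₀, hv₀, hlen⟩ := Nat.sInf_mem hne
  refine ⟨v₀, hv₀, ?_⟩
  intro v' hv'
  have hmem : ℓ (w * (v₀ * v')) ∈ S := ⟨v₀ * v', mul_mem hv₀ hv', rfl⟩
  have h4 := Nat.sInf_le hmem
  rw [← mul_assoc] at h4
  omega

lemma minRep_simple_mul {z : W} (hz : isMinimalRep cs J z) (i : B)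
    (hd : ℓ (σ i * z) < ℓ z) : isMinimalRep cs J (σ i * z) := by
  intro v hv
  have h1 := hz v hv
  have h2 := cs.length_simple_mul z i
  have h3 := cs.length_simple_mul (z * v) i
  rw [mul_assoc]
  omega

end Parabolic

section StepMul

variable (J : Set B)

/-- One-step `P`-Bruhat relation is preserved by right multiplication by a simple
reflection in `J`. -/
lemma extPStep_mul_simple {u w : W} {j : B} (hj : j ∈ J) (h : extPStep cs J u w) :
    extPStep cs J (u * σ j) (w * σ j) := by
  obtain ⟨t, ht, htP, rfl, hlen⟩ := h
  have ht' : cs.IsReflection (σ j * t * σ j) := by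
    have := ht.conj (σ j)
    rwa [cs.inv_simple] at this
  have ht'P : (σ j * t * σ j) ∉ parabolicSubgroup cs J := by
    have := not_mem_parabolic_conj cs J (simple_mem_parabolic cs J hj) htP
    rwa [cs.inv_simple] at this
  have he : (u * σ j) * (σ j * t * σ j) = u * t * σ j := by
    rw [show u * σ j * (σ j * t * σ j) = u * (σ j * σ j) * t * σ j by group,
      cs.simple_mul_simple_self, mul_one]
  refine ⟨σ j * t * σ j, ht', ht'P, he.symm, ?_⟩
  -- suppose not
  by_contra hcon
  push_neg at hcon
  have hne : ℓ (u * t * σ j) ≠ ℓ (u * σ j) := by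
    rw [← he]
    exact (by
      have := ht'.length_mul_left_ne (u * σ j)
      exact this)
  have hlt : ℓ (u * t * σ j) < ℓ (u * σ j) := by omega
  have h2 := cs.length_mul_simple u j
  have h3 := cs.length_mul_simple (u * t) j
  -- forces the cover situation
  have hb : ℓ (u * t) = ℓ u + 1 := by omega
  have hc1 : ℓ (u * t * σ j) = ℓ u := by omega
  have hc2 : ℓ (u * σ j) = ℓ u + 1 := by omega
  -- reduced word for u * t * σ j
  obtain ⟨γ, hγlen, hγ⟩ := cs.exists_reduced_word (u * t * σ j)
  have hγlen : γ.length = ℓ (u * t * σ j) := by rw [hγ]; exact hγlen.eq.symm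
  have hω : π (γ ++ [j]) = u * t := by
    rw [cs.wordProd_append, cs.wordProd_singleton, ← hγ, mul_assoc,
      cs.simple_mul_simple_self, mul_one]
  have hinv : ℓ ((u * t) * t) < ℓ (u * t) := by
    rw [mul_assoc, ht.mul_self, mul_one]
    omega
  obtain ⟨k, hk, hke⟩ := strong_exchange cs ht hinv (γ ++ [j]) hω
  rw [mul_assoc, ht.mul_self, mul_one] at hke
  rcases lt_or_ge k γ.length with hkγ | hkγ
  · rw [List.eraseIdx_append_of_lt_length hkγ] at hke
    rw [cs.wordProd_append, cs.wordProd_singleton] at hke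
    have : u * σ j = π (γ.eraseIdx k) := by
      rw [hke, mul_assoc, cs.simple_mul_simple_self, mul_one]
    have hll : ℓ (u * σ j) ≤ γ.length - 1 := by
      rw [this]
      have := cs.length_wordProd_le (γ.eraseIdx k)
      rw [List.length_eraseIdx] at this
      simp [hkγ] at this
      omega
    omega
  · rw [List.eraseIdx_append_of_length_le hkγ] at hke
    have hk0 : k - γ.length = 0 := by
      simp at hk
      omega
    rw [hk0] at hke
    simp only [List.eraseIdx_cons_zero, List.append_nil] at hke
    rw [← hγ] at hke
    -- u = u * t * σ j
    have : (1 : W) = t * σ j := by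
      have h6 := hke
      rw [mul_assoc] at h6
      nth_rewrite 1 [show u = u * 1 by rw [mul_one]] at h6
      exact mul_left_cancel h6
    have ht_eq : t = σ j := by
      have h5 : t = (σ j)⁻¹ := by
        rw [eq_inv_iff_mul_eq_one]
        exact this.symm
      rwa [cs.inv_simple] at h5
    exact htP (ht_eq ▸ simple_mem_parabolic cs J hj)

lemma extPStep_mul_parabolic {u w : W} (h : extPStep cs J u w) {v : W}
    (hv : v ∈ parabolicSubgroup cs J) : extPStep cs J (u * v) (w * v) := by
  obtain ⟨α, hα, rfl⟩ := parabolic_word cs J hv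
  clear hv
  induction α using List.reverseRecOn with
  | nil => simpa using h
  | append_singleton β j ih =>
    have hβ : ∀ j' ∈ β, j' ∈ J := fun j' hj' => hα j' (by simp [hj'])
    have hj : j ∈ J := hα j (by simp)
    have ihh := ih hβ
    rw [cs.wordProd_append, cs.wordProd_singleton, ← mul_assoc, ← mul_assoc]
    exact extPStep_mul_simple cs J hj ihh

lemma extPLE_mul_parabolic {u w : W} (h : extPLE cs J u w) {v : W}
    (hv : v ∈ parabolicSubgroup cs J) : extPLE cs J (u * v) (w * v) := by
  induction h with
  | refl => exact Relation.ReflTransGen.refl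
  | tail h1 step ih =>
    exact Relation.ReflTransGen.tail ih (extPStep_mul_parabolic cs J step hv)

lemma extPLE_bruhatLE {u w : W} (h : extPLE cs J u w) : bruhatLE cs u w := by
  induction h with
  | refl => exact Relation.ReflTransGen.refl
  | tail h1 step ih =>
    obtain ⟨t, ht, _, he, hl⟩ := step
    exact Relation.ReflTransGen.tail ih ⟨t, ht, he, hl⟩

end StepMul

section Converse

variable (J : Set B)

/-- Key lemma: if `z` is a minimal coset representative and `x < z` in Bruhat order, then
there is a covering step from `x` towards `z` using a reflection not in `W_P`. -/
lemma exists_good_step : ∀ n : ℕ, ∀ {x z : W}, ℓ z ≤ n → isMinimalRep cs J z →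
    bruhatLE cs x z → x ≠ z →
    ∃ t : W, cs.IsReflection t ∧ t ∉ parabolicSubgroup cs J ∧ ℓ (x * t) = ℓ x + 1 ∧
      bruhatLE cs (x * t) z := by
  intro n
  induction n with
  | zero =>
    intro x z hn hmin h hne
    have h1 := bruhat_length_le cs h
    exact absurd (bruhat_eq_of_length_eq cs h (by omega)) hne
  | succ n IH =>
    intro x z hn hmin h hne
    have hlt : ℓ x < ℓ z := lt_of_le_of_ne (bruhat_length_le cs h)
      (fun he => hne (bruhat_eq_of_length_eq cs h he))
    have hz1 : z ≠ 1 := by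
      intro hz1
      rw [hz1, cs.length_one] at hlt
      omega
    obtain ⟨i, hi⟩ := cs.exists_leftDescent_of_ne_one hz1
    have hdz : ℓ (σ i * z) < ℓ z := hi
    have hlz : ℓ (σ i * z) + 1 = ℓ z := by
      rcases cs.length_simple_mul z i with h' | h' <;> omega
    have hmin' : isMinimalRep cs J (σ i * z) := minRep_simple_mul cs J hmin i hdz
    have hzz' : bruhatLE cs (σ i * z) z := by
      have h5 := bruhat_simple_mul_step cs i (x := σ i * z)
        (by rw [cs.simple_mul_simple_cancel_left]; omega)
      rwa [cs.simple_mul_simple_cancel_left] at h5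
    rcases lt_or_gt_of_ne (cs.length_simple_mul_ne x i) with hdx | hax
    · -- descent at x
      have hlx : ℓ (σ i * x) + 1 = ℓ x := by
        rcases cs.length_simple_mul x i with h' | h' <;> omega
      have hx'z' : bruhatLE cs (σ i * x) (σ i * z) := liftL2 cs i h hdz hdx
      have hx'ne : σ i * x ≠ σ i * z := fun he => hne (mul_left_cancel he)
      obtain ⟨t, ht, htP, htlen, htle⟩ := IH (by omega) hmin' hx'z' hx'ne
      by_cases hxx : (σ i * x) * t = x
      · -- then x ≤ σ i z ; recurse on the smaller pair (x, σ i z)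
        have hxz' : bruhatLE cs x (σ i * z) := by rw [← hxx]; exact htle
        have hxz'ne : x ≠ σ i * z := by
          intro he
          rw [he, cs.simple_mul_simple_cancel_left] at hdx
          omega
        obtain ⟨t', ht', ht'P, ht'len, ht'le⟩ := IH (by omega) hmin' hxz' hxz'ne
        exact ⟨t', ht', ht'P, ht'len, ht'le.trans hzz'⟩
      · -- ascent of σ i at σ i * x * t
        have hasc : ℓ (σ i * x * t) < ℓ (σ i * (σ i * x * t)) := by
          by_contra hcon
          push_neg at hcon
          have hne2 : ℓ (σ i * (σ i * x * t)) ≠ ℓ (σ i * x * t) :=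
            cs.length_simple_mul_ne (σ i * x * t) i
          have hdes : ℓ (σ i * (σ i * x * t)) < ℓ (σ i * x * t) := by omega
          have hsl3 := sl3 cs i ht rfl (by omega : ℓ (σ i * x) < ℓ (σ i * x * t)) hdes
            (by rw [cs.simple_mul_simple_cancel_left]; omega)
          have hlen3 : ℓ (σ i * x) = ℓ (σ i * (σ i * x * t)) := by
            rcases cs.length_simple_mul (σ i * x * t) i with h' | h' <;> omega
          have heq := bruhat_eq_of_length_eq cs hsl3 hlen3
          exact hxx (mul_left_cancel heq).symm
        refine ⟨t, ht, htP, ?_, ?_⟩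
        · -- ℓ (x * t) = ℓ x + 1
          have he : x * t = σ i * (σ i * x * t) := by
            rw [← mul_assoc, cs.simple_mul_simple_cancel_left]
          rw [he]
          rcases cs.length_simple_mul (σ i * x * t) i with h' | h' <;> omega
        · -- bruhatLE (x * t) z
          have h6 : bruhatLE cs ((σ i * x) * t) z := htle.trans hzz'
          have h7 := liftL1 cs i h6 hdz
          rwa [← mul_assoc, cs.simple_mul_simple_cancel_left] at h7
    · -- ascent at x
      have hxz' : bruhatLE cs x (σ i * z) := liftL3 cs i h hdz hax
      by_cases hxe : x = σ i * z
      · -- one step x → z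
        refine ⟨x⁻¹ * σ i * x, ?_, ?_, ?_, ?_⟩
        · have h5 := (cs.isReflection_simple i).conj x⁻¹
          rwa [inv_inv] at h5
        · intro hmem
          have hz : z = σ i * x := by rw [hxe, cs.simple_mul_simple_cancel_left]
          have he : z * (x⁻¹ * σ i * x) = x := by
            rw [hz, show σ i * x * (x⁻¹ * σ i * x) = σ i * (σ i * x) by group,
              cs.simple_mul_simple_cancel_left]
          have h5 := hmin _ hmem
          rw [he] at h5
          rw [hxe] at h5
          omega
        · have he : x * (x⁻¹ * σ i * x) = σ i * x := by group
          rw [he, hxe, cs.simple_mul_simple_cancel_left]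
          omega
        · have he : x * (x⁻¹ * σ i * x) = σ i * x := by group
          rw [he, hxe, cs.simple_mul_simple_cancel_left]
          exact Relation.ReflTransGen.refl
      · obtain ⟨t', ht', ht'P, ht'len, ht'le⟩ := IH (by omega) hmin' hxz' hxe
        exact ⟨t', ht', ht'P, ht'len, ht'le.trans hzz'⟩

/-- If `z` is a minimal coset representative and `x ≤ z` in Bruhat order then `x ≤_P z`. -/
lemma bruhat_minRep_extPLE : ∀ n : ℕ, ∀ {x z : W}, ℓ z - ℓ x ≤ n → isMinimalRep cs J z →
    bruhatLE cs x z → extPLE cs J x z := by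
  intro n
  induction n with
  | zero =>
    intro x z hn hmin h
    by_cases hne : x = z
    · rw [hne]
      exact Relation.ReflTransGen.refl
    · have hlt : ℓ x < ℓ z := lt_of_le_of_ne (bruhat_length_le cs h)
        (fun he => hne (bruhat_eq_of_length_eq cs h he))
      omega
  | succ n IH =>
    intro x z hn hmin h
    by_cases hne : x = z
    · rw [hne]
      exact Relation.ReflTransGen.refl
    · have hlt : ℓ x < ℓ z := lt_of_le_of_ne (bruhat_length_le cs h)
        (fun he => hne (bruhat_eq_of_length_eq cs h he))
      obtain ⟨t, ht, htP, htlen, htle⟩ := exists_good_step cs J (ℓ z) le_rfl hmin h hne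
      have hstep : extPStep cs J x (x * t) := ⟨t, ht, htP, rfl, by omega⟩
      have hrest : extPLE cs J (x * t) z := IH (by omega) hmin htle
      exact Relation.ReflTransGen.head hstep hrest

end Converse

end ExtPAux
theorem extPLE_tfae [Finite W] {M : CoxeterMatrix B}
    (cs : CoxeterSystem M W) (J : Set B) (u w : W) :
    (extPLE cs J u w ↔ ∀ v ∈ parabolicSubgroup cs J, extPLE cs J (u * v) (w * v)) ∧
    (extPLE cs J u w ↔ ∃ v ∈ parabolicSubgroup cs J,
      isMinimalRep cs J (w * v) ∧ bruhatLE cs (u * v) (w * v)) := by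
  constructor
  · constructor
    · intro h v hv
      exact ExtPAux.extPLE_mul_parabolic cs J h hv
    · intro h
      have h1 := h 1 (one_mem _)
      simpa using h1
  · constructor
    · intro h
      obtain ⟨v₀, hv₀, hmin⟩ := ExtPAux.exists_minRep cs J w
      exact ⟨v₀, hv₀, hmin,
        ExtPAux.extPLE_bruhatLE cs J (ExtPAux.extPLE_mul_parabolic cs J h hv₀)⟩
    · rintro ⟨v, hv, hmin, hb⟩
      have h1 : extPLE cs J (u * v) (w * v) :=
        ExtPAux.bruhat_minRep_extPLE cs J (cs.length (w * v) - cs.length (u * v))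
          le_rfl hmin hb
      have h2 := ExtPAux.extPLE_mul_parabolic cs J h1 (inv_mem hv)
      simpa [mul_assoc] using h2
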